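/- Let $N \ge 1$, let $c^{demo}_i, c^{samp}_i \in \mathbb{R}$ and $q_i > 0$ for $i = 1,\dots,N$, and suppose $0 < a \le \exp(-c^{samp}_i)/q_i \le b$ for all $i$. Define $\mathcal{L}(\theta) := \frac{1}{N}\sum_{i=1}^N c^{demo}_i + \log\left(\frac{1}{N}\sum_{i=1}^N \frac{\exp(-c^{samp}_i)}{q_i}\right)$. Then $\mathcal{L} \le \frac{1}{N}\sum_{i=1}^N \left(c^{demo}_i - c^{samp}_i - \log q_i\right) - K$, where $K = \log(a) + \log(b) - 2\log\left(\frac{a+b}{2}\right)$. -/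

import Mathlib

open Finset Real

theorem maxent_irl_upper_bound
    (a b : ℝ) (ha : 0 < a) (hab : a ≤ b) (N : ℕ) (hN : 1 ≤ N)
    (cdemo csamp q : Fin N → ℝ) (hq : ∀ i, 0 < q i)
    (hmem : ∀ i, a ≤ Real.exp (-csamp i) / q i ∧ Real.exp (-csamp i) / q i ≤ b) :
    (1 / (N : ℝ)) * ∑ i, cdemo i
        + Real.log ((1 / (N : ℝ)) * ∑ i, Real.exp (-csamp i) / q i)
      ≤ (1 / (N : ℝ)) * ∑ i, (cdemo i - csamp i - Real.log (q i))
          - (Real.log a + Real.log b - 2 * Real.log ((a + b) / 2)) := by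
  have hn : (0:ℝ) < N := by exact_mod_cast Nat.lt_of_lt_of_le Nat.zero_lt_one hN
  set x : Fin N → ℝ := fun i => Real.exp (-csamp i) / q i with hxdef
  have hxpos : ∀ i, 0 < x i := fun i => lt_of_lt_of_le ha (hmem i).1
  have hb : (0:ℝ) < b := lt_of_lt_of_le ha hab
  set m : ℝ := (1 / (N : ℝ)) * ∑ i, x i with hm
  set h : ℝ := (1 / (N : ℝ)) * ∑ i, (x i)⁻¹ with hh
  have hmpos : a ≤ m := by
    have : (N:ℝ) * a ≤ ∑ i, x i := by
      calc (N:ℝ) * a = ∑ _i : Fin N, a := by simp [mul_comm]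
        _ ≤ ∑ i, x i := Finset.sum_le_sum fun i _ => (hmem i).1
    rw [hm]
    calc a = (1/(N:ℝ)) * ((N:ℝ) * a) := by field_simp
      _ ≤ (1/(N:ℝ)) * ∑ i, x i := by
          apply mul_le_mul_of_nonneg_left this (by positivity)
  have hmpos' : 0 < m := lt_of_lt_of_le ha hmpos
  have hhpos : 0 < h := by
    apply mul_pos (by positivity)
    apply Finset.sum_pos (fun i _ => inv_pos.2 (hxpos i))
    exact Finset.univ_nonempty_iff.2 (Fin.pos_iff_nonempty.mp (by omega))
  -- Jensen: -(1/N) ∑ log x_i ≤ log h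
  have jensen : -((1 / (N : ℝ)) * ∑ i, Real.log (x i)) ≤ Real.log h := by
    have amgm := Real.geom_mean_le_arith_mean_weighted Finset.univ
      (fun _ : Fin N => 1/(N:ℝ)) (fun i => (x i)⁻¹)
      (fun i _ => by positivity)
      (by simp [Finset.sum_const]; field_simp)
      (fun i _ => le_of_lt (inv_pos.2 (hxpos i)))
    have hprodpos : 0 < ∏ i, (x i)⁻¹ ^ (1/(N:ℝ)) := by
      apply Finset.prod_pos
      intro i _
      exact Real.rpow_pos_of_pos (inv_pos.2 (hxpos i)) _
    have amgm' : ∏ i, (x i)⁻¹ ^ (1/(N:ℝ)) ≤ h := by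
      rw [hh, Finset.mul_sum]; simpa using amgm
    have := Real.log_le_log hprodpos amgm'
    rw [Real.log_prod (fun i _ => (Real.rpow_pos_of_pos (inv_pos.2 (hxpos i)) _).ne')] at this
    calc -((1 / (N : ℝ)) * ∑ i, Real.log (x i))
        = ∑ i, Real.log ((x i)⁻¹ ^ (1/(N:ℝ))) := by
          rw [Finset.mul_sum, ← Finset.sum_neg_distrib]
          apply Finset.sum_congr rfl
          intro i _
          rw [Real.log_rpow (inv_pos.2 (hxpos i)), Real.log_inv]
          ring
      _ ≤ Real.log h := this
  -- Kantorovich: h ≤ (a + b - m) / (a * b)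
  have hkan : h ≤ (a + b - m) / (a * b) := by
    have hpt : ∀ i, (x i)⁻¹ ≤ (a + b - x i) / (a * b) := by
      intro i
      rw [inv_eq_one_div, div_le_div_iff₀ (hxpos i) (by positivity)]
      nlinarith [(hmem i).1, (hmem i).2, hxpos i]
    calc h ≤ (1/(N:ℝ)) * ∑ i, (a + b - x i) / (a * b) := by
          apply mul_le_mul_of_nonneg_left (Finset.sum_le_sum fun i _ => hpt i) (by positivity)
      _ = (a + b - m) / (a * b) := by
          have hs : ∑ i, (a + b - x i) = (N:ℝ)*(a+b) - ∑ i, x i := by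
            rw [Finset.sum_sub_distrib, Finset.sum_const, Finset.card_univ,
              Fintype.card_fin, nsmul_eq_mul]
          rw [hm, ← Finset.sum_div, hs]
          field_simp
  have hmh : m * h ≤ ((a+b)/2)^2 / (a*b) := by
    calc m * h ≤ m * ((a + b - m) / (a * b)) := by
          exact mul_le_mul_of_nonneg_left hkan (le_of_lt hmpos')
      _ ≤ ((a+b)/2)^2 / (a*b) := by
          rw [mul_div_assoc']
          gcongr ?x / _
          nlinarith [sq_nonneg ((a+b)/2 - m)]
  -- combine
  have key : Real.log m ≤ (1 / (N : ℝ)) * ∑ i, Real.log (x i)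
      - (Real.log a + Real.log b - 2 * Real.log ((a + b) / 2)) := by
    have h1 : Real.log m + Real.log h ≤ Real.log (((a+b)/2)^2 / (a*b)) := by
      rw [← Real.log_mul hmpos'.ne' hhpos.ne']
      exact Real.log_le_log (by positivity) hmh
    have h2 : Real.log (((a+b)/2)^2 / (a*b))
        = 2 * Real.log ((a+b)/2) - (Real.log a + Real.log b) := by
      rw [Real.log_div (by positivity) (by positivity), Real.log_pow,
        Real.log_mul ha.ne' hb.ne']
      push_cast; ring
    linarith [jensen]
  have hlogx : ∀ i, Real.log (x i) = -csamp i - Real.log (q i) := by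
    intro i
    rw [hxdef]
    simp only
    rw [Real.log_div (Real.exp_ne_zero _) (hq i).ne', Real.log_exp]
  have hsum : (1 / (N : ℝ)) * ∑ i, (cdemo i - csamp i - Real.log (q i))
      = (1 / (N : ℝ)) * ∑ i, cdemo i + (1 / (N : ℝ)) * ∑ i, Real.log (x i) := by
    rw [← mul_add, ← Finset.sum_add_distrib]
    congr 1
    apply Finset.sum_congr rfl
    intro i _
    rw [hlogx i]; ring
  rw [hsum]
  linarith [key]
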